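/- Let 𝔏 be a Lie conformal algebra over a field k of characteristic zero, generated by a subset 𝒢 with weight function wt : 𝒢 → ℕ, with filtrations 𝔏'_i and 𝔏_i. Assume there is r ∈ ℕ such that every monomial in 𝒢 of weight ≥ r is zero. Then 𝔏_r is contained in the center of 𝔏, i.e., for every a ∈ 𝔏_r, b ∈ 𝔏 and n ∈ ℕ one has a[n]b = 0. -/
import Mathlib


open Finset

/-- A (bundled) conformal algebra over a field `𝕜`. -/
structure ConfAlg (𝕜 : Type) [Field 𝕜] where
  A : Type
  [ag : AddCommGroup A]
  [mo : Module 𝕜 A]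
  mul : ℕ → A →ₗ[𝕜] A →ₗ[𝕜] A
  D : A →ₗ[𝕜] A
  dmul_zero : ∀ a b : A, mul 0 (D a) b = 0
  dmul_succ : ∀ (n : ℕ) (a b : A), mul (n + 1) (D a) b = (-(n + 1 : 𝕜)) • mul n a b
  leibniz : ∀ (n : ℕ) (a b : A), D (mul n a b) = mul n (D a) b + mul n a (D b)
  loc : ∀ a b : A, ∃ N : ℕ, ∀ n : ℕ, N ≤ n → mul n a b = 0

attribute [instance] ConfAlg.ag ConfAlg.mo

variable {𝕜 : Type} [Field 𝕜]

/-- Divided power of the derivation: `D^{(s)} = D^s / s!`. -/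
noncomputable def ConfAlg.dpow (C : ConfAlg 𝕜) (s : ℕ) (a : C.A) : C.A :=
  (s.factorial : 𝕜)⁻¹ • (C.D ^ s) a

/-- Conformal associativity. -/
def ConfAlg.IsAssoc (C : ConfAlg 𝕜) : Prop :=
  ∀ (a b c : C.A) (m n : ℕ),
    C.mul n (C.mul m a b) c =
      ∑ s ∈ Finset.range (m + 1), ((-1 : 𝕜) ^ s * (m.choose s : 𝕜)) •
        C.mul (m - s) a (C.mul (n + s) b c)

/-- Conformal Jacobi identity together with quasi-symmetry. -/
def ConfAlg.IsLie (C : ConfAlg 𝕜) : Prop :=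
  (∀ (a b c : C.A) (m n : ℕ),
    C.mul n (C.mul m a b) c =
      ∑ s ∈ Finset.range (m + 1), ((-1 : 𝕜) ^ s * (m.choose s : 𝕜)) •
        (C.mul (m - s) a (C.mul (n + s) b c) - C.mul (n + s) b (C.mul (m - s) a c))) ∧
  (∀ (a b : C.A) (n N : ℕ), (∀ s : ℕ, N ≤ s → C.mul (n + s) b a = 0) →
    C.mul n a b =
      -∑ s ∈ Finset.range N, ((-1 : 𝕜) ^ (s + n)) • C.dpow s (C.mul (n + s) b a))

/-- Monomials in a family `f` with weights `wt`; `IsMon C f wt w v` means `w`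
is a monomial (arbitrary placement of parentheses) of weight `v`. -/
inductive ConfAlg.IsMon (C : ConfAlg 𝕜) {I : Type} (f : I → C.A) (wt : I → ℕ) : C.A → ℕ → Prop
  | base (i : I) : ConfAlg.IsMon C f wt (f i) (wt i)
  | mul (n : ℕ) {a b : C.A} {wa wb : ℕ} :
      ConfAlg.IsMon C f wt a wa → ConfAlg.IsMon C f wt b wb →
      ConfAlg.IsMon C f wt (C.mul n a b) (wa + wb + n)

/-- `G` generates `C`. -/
def ConfAlg.Generates (C : ConfAlg 𝕜) (G : Set C.A) : Prop :=
  ∀ p : Submodule 𝕜 C.A, G ⊆ ↑p → (∀ a ∈ p, C.D a ∈ p) →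
    (∀ (n : ℕ) (a b : C.A), a ∈ p → b ∈ p → C.mul n a b ∈ p) → ∀ x : C.A, x ∈ p

/-- The filtration `𝔏'_i`. -/
def ConfAlg.Lp (C : ConfAlg 𝕜) {I : Type} (f : I → C.A) (wt : I → ℕ) (i : ℤ) :
    Submodule 𝕜 C.A :=
  Submodule.span 𝕜 {x : C.A | ∃ (m : ℕ) (w : C.A) (v : ℕ),
    C.IsMon f wt w v ∧ x = (C.D ^ m) w ∧ i + m ≤ (v : ℤ)}

/-- The filtration `𝔏_i`. -/
def ConfAlg.Lf (C : ConfAlg 𝕜) {I : Type} (f : I → C.A) (wt : I → ℕ) (i : ℤ) : Set C.A :=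
  {a : C.A | ∃ n : ℕ, (C.D ^ n) a ∈ C.Lp f wt (i - n)}

section Aux

variable (C : ConfAlg 𝕜) {I : Type} (f : I → C.A) (wt : I → ℕ)

lemma Lp_mono_aux {i i' : ℤ} (h : i' ≤ i) : C.Lp f wt i ≤ C.Lp f wt i' := by
  apply Submodule.span_mono
  rintro x ⟨m, w, v, hm, hx, hle⟩
  exact ⟨m, w, v, hm, hx, le_trans (by linarith) hle⟩

lemma mon_mem_Lp_aux {w : C.A} {v : ℕ} (h : C.IsMon f wt w v) : w ∈ C.Lp f wt (v : ℤ) :=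
  Submodule.subset_span ⟨0, w, v, h, by simp, by simp⟩

lemma Lp_eq_zero_aux {r : ℕ}
    (hr : ∀ (w : C.A) (v : ℕ), C.IsMon f wt w v → r ≤ v → w = 0)
    {i : ℤ} (hi : (r : ℤ) ≤ i) : ∀ x ∈ C.Lp f wt i, x = 0 := by
  intro x hx
  have hle : C.Lp f wt i ≤ ⊥ := by
    rw [ConfAlg.Lp, Submodule.span_le]
    rintro y ⟨m, w, v, hm, hy, hvle⟩
    have hw : w = 0 := hr w v hm (by exact_mod_cast le_trans hi (le_trans (by linarith) hvle))
    simp [hy, hw]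
  simpa using hle hx

lemma mulD_mon_mem_aux {w u : C.A} {vw vu : ℕ}
    (hw : C.IsMon f wt w vw) (hu : C.IsMon f wt u vu) :
    ∀ (k m : ℕ), C.mul m ((C.D ^ k) w) u ∈ C.Lp f wt ((vw : ℤ) - k + vu + m) := by
  intro k
  induction k with
  | zero =>
    intro m
    have h1 := mon_mem_Lp_aux C f wt (ConfAlg.IsMon.mul m hw hu)
    have h2 : ((vw + vu + m : ℕ) : ℤ) = (vw : ℤ) - (0 : ℕ) + vu + m := by push_cast; ring
    simpa [h2] using h1
  | succ k ih =>
    intro m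
    have hD : (C.D ^ (k + 1)) w = C.D ((C.D ^ k) w) := by
      rw [pow_succ']; rfl
    match m with
    | 0 =>
      rw [hD, C.dmul_zero]
      exact Submodule.zero_mem _
    | m + 1 =>
      rw [hD, C.dmul_succ]
      have h2 : ((vw : ℤ) - (k + 1 : ℕ) + vu + (m + 1 : ℕ)) = (vw : ℤ) - k + vu + m := by
        push_cast; ring
      rw [h2]
      exact Submodule.smul_mem _ _ (ih m)

lemma mul_mon_mem_aux {u : C.A} {vu : ℕ} (hu : C.IsMon f wt u vu)
    {i : ℤ} {x : C.A} (hx : x ∈ C.Lp f wt i) (m : ℕ) :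
    C.mul m x u ∈ C.Lp f wt (i + vu + m) := by
  refine Submodule.span_induction ?_ ?_ ?_ ?_ hx
  · rintro y ⟨k, w, vw, hwmon, rfl, hle⟩
    have h1 := mulD_mon_mem_aux C f wt hwmon hu k m
    exact Lp_mono_aux C f wt (by linarith) h1
  · simp only [map_zero, LinearMap.zero_apply]
    exact Submodule.zero_mem _
  · intro y z _ _ hy hz
    rw [map_add, LinearMap.add_apply]
    exact Submodule.add_mem _ hy hz
  · intro c y _ hy
    rw [map_smul, LinearMap.smul_apply]
    exact Submodule.smul_mem _ _ hy

lemma exists_scalar_aux [CharZero 𝕜] (n l : ℕ) :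
    ∃ c : 𝕜, c ≠ 0 ∧ ∀ x y : C.A, C.mul (l + n) ((C.D ^ n) x) y = c • C.mul l x y := by
  induction n with
  | zero => exact ⟨1, one_ne_zero, fun x y => by simp⟩
  | succ n ih =>
    obtain ⟨c, hc0, hc⟩ := ih
    refine ⟨(-((l + n + 1 : ℕ) : 𝕜)) * c, ?_, fun x y => ?_⟩
    · exact mul_ne_zero (neg_ne_zero.mpr (Nat.cast_ne_zero.mpr (by omega))) hc0
    · have hD : (C.D ^ (n + 1)) x = C.D ((C.D ^ n) x) := by rw [pow_succ']; rfl
      have hidx : l + (n + 1) = (l + n) + 1 := rfl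
      rw [hidx, hD, C.dmul_succ, hc x y, smul_smul]
      congr 1
      push_cast
      ring

end Aux

/-- If every monomial in `𝒢` of weight `≥ r` is zero, then `𝔏_r` is
contained in the center of `𝔏`. -/
theorem Lf_r_subset_center
    [CharZero 𝕜] (C : ConfAlg 𝕜) (hLie : C.IsLie) (G : Set C.A) (wt : ↥G → ℕ)
    (hgen : C.Generates G) (r : ℕ)
    (hr : ∀ (w : C.A) (v : ℕ),
      C.IsMon (Subtype.val : ↥G → C.A) wt w v → r ≤ v → w = 0) :
    ∀ a ∈ C.Lf (Subtype.val : ↥G → C.A) wt (r : ℤ),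
      ∀ (b : C.A) (n : ℕ), C.mul n a b = 0 := by
  intro a ha b n
  obtain ⟨N, hN⟩ := ha
  let p : Submodule 𝕜 C.A :=
    { carrier := {x | ∀ l : ℕ, C.mul l a x = 0}
      add_mem' := fun {x y} hx hy l => by rw [map_add, hx l, hy l, add_zero]
      zero_mem' := fun l => map_zero _
      smul_mem' := fun c x hx l => by rw [map_smul, hx l, smul_zero] }
  have hmemp : ∀ x : C.A, x ∈ p ↔ ∀ l : ℕ, C.mul l a x = 0 := fun x => Iff.rfl
  have key : ∀ x, x ∈ p := by
    apply hgen
    · -- G ⊆ p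
      intro g hg
      rw [SetLike.mem_coe, hmemp]
      intro l
      obtain ⟨c, hc0, hc⟩ := exists_scalar_aux C N l
      have hmon : C.IsMon (Subtype.val : ↥G → C.A) wt g (wt ⟨g, hg⟩) :=
        ConfAlg.IsMon.base (⟨g, hg⟩ : ↥G)
      have h1 : C.mul (l + N) ((C.D ^ N) a) g ∈
          C.Lp (Subtype.val : ↥G → C.A) wt (((r : ℤ) - N) + (wt ⟨g, hg⟩ : ℕ) + (l + N : ℕ)) :=
        mul_mon_mem_aux C _ wt hmon hN (l + N)
      have h0 : C.mul (l + N) ((C.D ^ N) a) g = 0 :=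
        Lp_eq_zero_aux C _ wt hr (by push_cast; linarith) _ h1
      have h2 := hc a g
      rw [h0] at h2
      have := (smul_eq_zero.mp h2.symm).resolve_left hc0
      exact this
    · -- closed under D
      intro x hx
      rw [hmemp] at *
      intro l
      have hDa : C.mul l (C.D a) x = 0 := by
        match l with
        | 0 => exact C.dmul_zero a x
        | l + 1 => rw [C.dmul_succ, hx l, smul_zero]
      have hL := C.leibniz l a x
      rw [hx l, map_zero, hDa, zero_add] at hL
      exact hL.symm
    · -- closed under products
      intro m x y hx hy
      rw [hmemp] at *
      have hflip : ∀ z : C.A, (∀ l : ℕ, C.mul l a z = 0) → ∀ l : ℕ, C.mul l z a = 0 := by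
        intro z hz l
        have := hLie.2 z a l 0 (fun s _ => hz (l + s))
        simpa using this
      have hxa := hflip x hx
      have hya := hflip y hy
      intro l
      have hprod : ∀ m' : ℕ, C.mul m' (C.mul m x y) a = 0 := by
        intro m'
        rw [hLie.1 x y a m m']
        apply Finset.sum_eq_zero
        intro s _
        simp [hya (m' + s), hxa (m - s)]
      have := hLie.2 a (C.mul m x y) l 0 (fun s _ => hprod (l + s))
      simpa using this
  exact key b n
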